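/- Let f be a continuous risk-neutral density of log S_T with ∫_0^∞ e^x f(x)dx < ∞, and for a grid of strikes Δ = {log K_1,...,log K_q} define market prices C̃_i, P̃_i via the discounted payoff integrals against f, and estimated prices Ĉ_i, P̂_i as the discounted payoff integrals against the piecewise constant density f_Δ minimizing the least squares criterion among nonnegative step densities on the extended grid. Then as K_1 → 0, K_q → ∞, q → ∞, and the mesh |Δ| = max_i log(K_{i+1}/K_i) → 0, the average squared pricing error (1/(2q))[Σ_{i=1}^q (Ĉ_i − C̃_i)² + Σ_{i=1}^q (P̂_i − P̃_i)²] converges to 0. -/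

import Mathlib

open MeasureTheory Filter
open Set

lemma tail_tendsto {g : ℝ → ℝ} (hg : Integrable g) (hg0 : ∀ x, 0 ≤ g x) :
    Tendsto (fun s : ℝ => ∫ x in Set.Ioi s, g x) atTop (nhds 0) := by
  have hanti : Antitone (fun s : ℝ => ∫ x in Set.Ioi s, g x) := by
    intro u v huv
    exact setIntegral_mono_set hg.integrableOn
      (Filter.Eventually.of_forall hg0) (HasSubset.Subset.eventuallyLE (Set.Ioi_subset_Ioi huv))
  have hbdd : BddBelow (Set.range (fun s : ℝ => ∫ x in Set.Ioi s, g x)) := by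
    refine ⟨0, ?_⟩
    rintro _ ⟨s, rfl⟩
    exact setIntegral_nonneg measurableSet_Ioi fun x _ => hg0 x
  have h1 := tendsto_atTop_ciInf hanti hbdd
  have h2 : Tendsto (fun m : ℕ => ∫ x in Set.Ioi (m : ℝ), g x) atTop
      (nhds (⨅ s : ℝ, ∫ x in Set.Ioi s, g x)) := h1.comp tendsto_natCast_atTop_atTop
  have h3 : Tendsto (fun m : ℕ => ∫ x in Set.Ioi (m : ℝ), g x) atTop (nhds 0) := by
    have hA : Antitone (fun m : ℕ => Set.Ioi (m : ℝ)) := by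
      intro m m' h
      exact Set.Ioi_subset_Ioi (by exact_mod_cast h)
    have := Antitone.tendsto_setIntegral (s := fun m : ℕ => Set.Ioi (m : ℝ))
      (fun i => measurableSet_Ioi) hA hg.integrableOn
    have hempty : (⋂ m : ℕ, Set.Ioi (m : ℝ)) = ∅ := by
      ext x
      simp only [Set.mem_iInter, Set.mem_Ioi, Set.mem_empty_iff_false, iff_false, not_forall,
        not_lt]
      obtain ⟨m, hm⟩ := exists_nat_gt x
      exact ⟨m, hm.le⟩
    rwa [hempty, Measure.restrict_empty, integral_zero_measure] at this
  have := tendsto_nhds_unique h2 h3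
  rwa [this] at h1

lemma exp_Ioc_integral {u v : ℝ} (huv : u ≤ v) :
    ∫ y in Set.Ioc u v, Real.exp y = Real.exp v - Real.exp u := by
  rw [← intervalIntegral.integral_of_le huv, integral_exp]

lemma exp_Ioc_bounds {u v : ℝ} (huv : u ≤ v) :
    Real.exp u * (v - u) ≤ Real.exp v - Real.exp u ∧
      Real.exp v - Real.exp u ≤ Real.exp v * (v - u) := by
  constructor
  · have h := Real.add_one_le_exp (v - u)
    have : Real.exp v = Real.exp u * Real.exp (v - u) := by
      rw [← Real.exp_add]; ring_nf
    nlinarith [Real.exp_pos u]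
  · have h := Real.add_one_le_exp (u - v)
    have : Real.exp u = Real.exp v * Real.exp (u - v) := by
      rw [← Real.exp_add]; ring_nf
    nlinarith [Real.exp_pos v]

lemma wexp_le {f : ℝ → ℝ} (hf0 : ∀ x, 0 ≤ f x) (hfi : Integrable f)
    (hfe : Integrable (fun x => Real.exp x * f x)) {s : Set ℝ} (hs : MeasurableSet s)
    {B : ℝ} (hB : ∀ y ∈ s, Real.exp y ≤ B) :
    ∫ y in s, Real.exp y * f y ≤ B * ∫ y in s, f y := by
  rw [← integral_const_mul]
  exact setIntegral_mono_on hfe.integrableOn (hfi.integrableOn.const_mul B) hs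
    (fun y hy => mul_le_mul_of_nonneg_right (hB y hy) (hf0 y))

lemma le_wexp {f : ℝ → ℝ} (hf0 : ∀ x, 0 ≤ f x) (hfi : Integrable f)
    (hfe : Integrable (fun x => Real.exp x * f x)) {s : Set ℝ} (hs : MeasurableSet s)
    {B : ℝ} (hB : ∀ y ∈ s, B ≤ Real.exp y) :
    B * ∫ y in s, f y ≤ ∫ y in s, Real.exp y * f y := by
  rw [← integral_const_mul]
  exact setIntegral_mono_on (hfi.integrableOn.const_mul B) hfe.integrableOn hs
    (fun y hy => mul_le_mul_of_nonneg_right (hB y hy) (hf0 y))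

lemma per_n (f : ℝ → ℝ) (hf_cont : Continuous f) (hf0 : ∀ x, 0 ≤ f x)
    (hfi : Integrable f) (hf1 : (∫ x, f x) = 1)
    (hfe : Integrable fun x => Real.exp x * f x)
    (Q : ℕ) (hQ : 1 ≤ Q) (K : Fin (Q + 2) → ℝ)
    (hK : ∀ j, 0 < K j) (hKm : StrictMono K)
    (m : ℝ) (hm0 : 0 ≤ m)
    (hm : ∀ l : Fin (Q + 1), 0 < l.1 → l.1 < Q →
      Real.log (K l.succ) - Real.log (K l.castSucc) ≤ m) :
    ∃ b : Fin (Q + 1) → ℝ, (∀ l, 0 ≤ b l) ∧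
      (∑ l : Fin (Q + 1), b l * (Real.log (K l.succ) - Real.log (K l.castSucc))) = 1 ∧
      ∀ i : Fin Q,
        |(∫ y in Set.Ioi (Real.log (K i.succ.castSucc)),
            (Real.exp y - K i.succ.castSucc) *
              ∑ l : Fin (Q + 1),
                Set.indicator (Set.Ioc (Real.log (K l.castSucc)) (Real.log (K l.succ)))
                  (fun _ => b l) y) -
          ∫ y in Set.Ioi (Real.log (K i.succ.castSucc)),
            (Real.exp y - K i.succ.castSucc) * f y| ≤
          2 * K 1 + m * Real.exp m * (∫ x, Real.exp x * f x) +
            (K (Fin.last (Q + 1)) / K ⟨Q, by omega⟩ + 1) *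
              ∫ y in Set.Ioi (Real.log (K ⟨Q, by omega⟩)), Real.exp y * f y ∧
        |(∫ y in Set.Iio (Real.log (K i.succ.castSucc)),
            (K i.succ.castSucc - Real.exp y) *
              ∑ l : Fin (Q + 1),
                Set.indicator (Set.Ioc (Real.log (K l.castSucc)) (Real.log (K l.succ)))
                  (fun _ => b l) y) -
          ∫ y in Set.Iio (Real.log (K i.succ.castSucc)),
            (K i.succ.castSucc - Real.exp y) * f y| ≤
          2 * K 1 + m * Real.exp m * (∫ x, Real.exp x * f x) +
            (K (Fin.last (Q + 1)) / K ⟨Q, by omega⟩ + 1) *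
              ∫ y in Set.Ioi (Real.log (K ⟨Q, by omega⟩)), Real.exp y * f y := by
  set T : Fin (Q + 2) → ℝ := fun j => Real.log (K j) with hTdef
  have hT : StrictMono T := fun p r h => Real.log_lt_log (hK p) (hKm h)
  have hTm : Monotone T := hT.monotone
  have hTle : ∀ (p r : Fin (Q + 2)), p.1 ≤ r.1 → T p ≤ T r := fun p r h => hTm h
  set S : Fin (Q + 1) → Set ℝ := fun l =>
    if l.1 = 0 then Set.Iic (T l.succ) else if l.1 = Q then Set.Ioi (T l.castSucc)
      else Set.Ioc (T l.castSucc) (T l.succ) with hSdef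
  set I : Fin (Q + 1) → Set ℝ := fun l => Set.Ioc (T l.castSucc) (T l.succ) with hIdef
  have hδ : ∀ l : Fin (Q + 1), (0:ℝ) < T l.succ - T l.castSucc :=
    fun l => sub_pos.2 (hT (Fin.castSucc_lt_succ (i := l)))
  set F : Fin (Q + 1) → ℝ := fun l => ∫ y in S l, f y with hFdef
  set b : Fin (Q + 1) → ℝ := fun l => F l / (T l.succ - T l.castSucc) with hbdef
  have hSmeas : ∀ l, MeasurableSet (S l) := by
    intro l
    simp only [hSdef]
    split_ifs
    · exact measurableSet_Iic
    · exact measurableSet_Ioi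
    · exact measurableSet_Ioc
  have hF0 : ∀ l, 0 ≤ F l := fun l => setIntegral_nonneg (hSmeas l) (fun x _ => hf0 x)
  have hb0 : ∀ l, 0 ≤ b l := fun l => div_nonneg (hF0 l) (hδ l).le
  have hbδ : ∀ l, b l * (T l.succ - T l.castSucc) = F l :=
    fun l => div_mul_cancel₀ (F l) (hδ l).ne'
  have hSlow : ∀ l : Fin (Q + 1), l.1 ≠ 0 → ∀ x ∈ S l, T l.castSucc < x := by
    intro l hl x hx
    simp only [hSdef, if_neg hl] at hx
    split_ifs at hx
    · exact hx
    · exact hx.1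
  have hShigh : ∀ l : Fin (Q + 1), l.1 ≠ Q → ∀ x ∈ S l, x ≤ T l.succ := by
    intro l hl x hx
    simp only [hSdef] at hx
    by_cases h1 : l.1 = 0
    · rw [if_pos h1] at hx; exact hx
    · rw [if_neg h1, if_neg hl] at hx; exact hx.2
  have hdisj : ∀ l l' : Fin (Q + 1), l ≠ l' → Disjoint (S l) (S l') := by
    have aux : ∀ l l' : Fin (Q + 1), l.1 < l'.1 → Disjoint (S l) (S l') := by
      intro l l' hll
      rw [Set.disjoint_left]
      intro x hx hx'
      have h1 : x ≤ T l.succ := hShigh l (by omega) x hx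
      have h2 : T l'.castSucc < x := hSlow l' (by omega) x hx'
      have h3 : T l.succ ≤ T l'.castSucc := hTle _ _ (by simp [Fin.val_succ]; omega)
      linarith
    intro l l' hne
    rcases lt_or_gt_of_ne (fun h => hne (Fin.ext h) : l.1 ≠ l'.1) with h | h
    · exact aux l l' h
    · exact (aux l' l h).symm
  have hcover : ∀ x : ℝ, ∃ l : Fin (Q + 1), x ∈ S l := by
    intro x
    by_cases hx1 : x ≤ T 1
    · refine ⟨⟨0, by omega⟩, ?_⟩
      have : T (⟨0, by omega⟩ : Fin (Q+1)).succ = T 1 := by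
        congr 1
      simp only [hSdef, if_pos rfl, Set.mem_Iic, this]
      exact hx1
    · push_neg at hx1
      have hs1 : (1 : Fin (Q + 2)) ∈ Finset.univ.filter (fun j : Fin (Q + 2) => T j < x) := by
        simp [hx1]
      set s := Finset.univ.filter (fun j : Fin (Q + 2) => T j < x) with hsdef
      have hsne : s.Nonempty := ⟨1, hs1⟩
      set j := s.max' hsne with hjdef
      have hjmem : j ∈ s := s.max'_mem hsne
      have hjlt : T j < x := by
        simp only [hsdef, Finset.mem_filter] at hjmem
        exact hjmem.2
      by_cases hjQ : Q ≤ j.1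
      · refine ⟨⟨Q, by omega⟩, ?_⟩
        have hne0 : Q ≠ 0 := by omega
        simp only [hSdef, if_neg hne0, if_pos rfl, Set.mem_Ioi]
        exact lt_of_le_of_lt (hTle _ _ (by simp; omega)) hjlt
      · push_neg at hjQ
        have hj1 : 1 ≤ j.1 := by
          have := s.le_max' 1 hs1
          simpa [hjdef, Fin.le_def] using this
        refine ⟨⟨j.1, by omega⟩, ?_⟩
        have hne0 : j.1 ≠ 0 := by omega
        have hneQ : j.1 ≠ Q := by omega
        simp only [hSdef, if_neg hne0, if_neg hneQ, Set.mem_Ioc]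
        constructor
        · exact lt_of_le_of_lt (hTle _ _ (by simp)) hjlt
        · by_contra hcon
          push_neg at hcon
          have hmem : (⟨j.1 + 1, by omega⟩ : Fin (Q + 2)) ∈ s := by
            simp only [hsdef, Finset.mem_filter, Finset.mem_univ, true_and]
            exact lt_of_lt_of_le (by exact hcon) (le_refl x) |>.trans_le (le_refl x)
          have := s.le_max' _ hmem
          simp only [← hjdef, Fin.le_def] at this
          omega
  have hUnion : (⋃ l, S l) = Set.univ := Set.eq_univ_of_forall fun x => Set.mem_iUnion.2 (hcover x)
  have hsplit : ∀ (A : Set ℝ), MeasurableSet A → ∀ h : ℝ → ℝ, Integrable h →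
      ∫ y in A, h y = ∑ l : Fin (Q + 1), ∫ y in S l ∩ A, h y := by
    intro A hA h hh
    rw [← integral_biUnion_finset Finset.univ (fun l _ => (hSmeas l).inter hA)
        (fun ⦃l⦄ _ ⦃l'⦄ _ hne => (hdisj l l' hne).mono Set.inter_subset_left Set.inter_subset_left)
        (fun l _ => hh.integrableOn)]
    congr 1
    have : (⋃ l ∈ Finset.univ, (S l ∩ A)) = (⋃ l, S l) ∩ A := by
      simp [Set.iUnion_inter]
    rw [this, hUnion, Set.univ_inter]
  have hMtot : ∑ l : Fin (Q + 1), ∫ y in S l, Real.exp y * f y = ∫ x, Real.exp x * f x := by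
    have := hsplit Set.univ MeasurableSet.univ (fun y => Real.exp y * f y) hfe
    simpa [Set.inter_univ] using this.symm
  have hmass : ∑ l : Fin (Q + 1), F l = 1 := by
    have := hsplit Set.univ MeasurableSet.univ f hfi
    rw [← hf1]
    simpa [Set.inter_univ] using this.symm
  have hcall_int : ∀ Kv : ℝ, Integrable (fun y => (Real.exp y - Kv) * f y) := by
    intro Kv
    have : (fun y => (Real.exp y - Kv) * f y) = fun y => Real.exp y * f y - Kv * f y := by
      funext y; ring
    rw [this]
    exact hfe.sub (hfi.const_mul Kv)
  have hput_int : ∀ Kv : ℝ, Integrable (fun y => (Kv - Real.exp y) * f y) := by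
    intro Kv
    have : (fun y => (Kv - Real.exp y) * f y) = fun y => Kv * f y - Real.exp y * f y := by
      funext y; ring
    rw [this]
    exact (hfi.const_mul Kv).sub hfe
  have hstep : ∀ (A : Set ℝ), MeasurableSet A → ∀ g : ℝ → ℝ, Continuous g →
      (∫ y in A, g y * ∑ l : Fin (Q + 1),
          Set.indicator (Set.Ioc (T l.castSucc) (T l.succ)) (fun _ => b l) y)
        = ∑ l : Fin (Q + 1), (∫ y in A ∩ Set.Ioc (T l.castSucc) (T l.succ), g y) * b l := by
    intro A hA g hg
    have h1 : ∀ y, g y * ∑ l : Fin (Q + 1),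
        Set.indicator (Set.Ioc (T l.castSucc) (T l.succ)) (fun _ => b l) y
        = ∑ l : Fin (Q + 1),
            Set.indicator (Set.Ioc (T l.castSucc) (T l.succ)) (fun z => g z * b l) y := by
      intro y
      rw [Finset.mul_sum]
      refine Finset.sum_congr rfl fun l _ => ?_
      by_cases hy : y ∈ Set.Ioc (T l.castSucc) (T l.succ)
      · simp [Set.indicator_of_mem hy]
      · simp [Set.indicator_of_notMem hy]
    simp_rw [h1]
    rw [integral_finset_sum Finset.univ (fun l _ => Integrable.integrableOn
      (((integrable_indicator_iff measurableSet_Ioc).2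
        ((show Continuous fun z => g z * b l from hg.mul continuous_const).integrableOn_Ioc)) ))]
    refine Finset.sum_congr rfl fun l _ => ?_
    rw [setIntegral_indicator measurableSet_Ioc, integral_mul_const]
  have hIoiIoc : ∀ (i : Fin Q) (l : Fin (Q + 1)),
      Set.Ioi (T i.succ.castSucc) ∩ Set.Ioc (T l.castSucc) (T l.succ)
        = if i.1 < l.1 then Set.Ioc (T l.castSucc) (T l.succ) else ∅ := by
    intro i l
    split_ifs with h
    · refine Set.inter_eq_right.2 fun x hx => ?_
      exact lt_of_le_of_lt (hTle i.succ.castSucc l.castSucc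
        (by simp only [Fin.coe_castSucc, Fin.val_succ]; omega)) hx.1
    · refine Set.eq_empty_iff_forall_notMem.2 ?_
      rintro x ⟨hx1, hx2⟩
      have : x ≤ T i.succ.castSucc := le_trans hx2.2 (hTle _ _
        (by simp only [Fin.coe_castSucc, Fin.val_succ]; omega))
      exact absurd hx1 (not_lt.2 this)
  have hIicIoc : ∀ (i : Fin Q) (l : Fin (Q + 1)),
      Set.Iic (T i.succ.castSucc) ∩ Set.Ioc (T l.castSucc) (T l.succ)
        = if i.1 < l.1 then ∅ else Set.Ioc (T l.castSucc) (T l.succ) := by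
    intro i l
    split_ifs with h
    · refine Set.eq_empty_iff_forall_notMem.2 ?_
      rintro x ⟨hx1, hx2⟩
      have : T i.succ.castSucc < x := lt_of_le_of_lt (hTle _ _
        (by simp only [Fin.coe_castSucc, Fin.val_succ]; omega)) hx2.1
      exact absurd hx1 (not_le.2 this)
    · refine Set.inter_eq_right.2 fun x hx => ?_
      exact le_trans hx.2 (hTle _ _ (by simp only [Fin.coe_castSucc, Fin.val_succ]; omega))
  have hSIoi : ∀ (i : Fin Q) (l : Fin (Q + 1)),
      S l ∩ Set.Ioi (T i.succ.castSucc) = if i.1 < l.1 then S l else ∅ := by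
    intro i l
    split_ifs with h
    · refine Set.inter_eq_left.2 fun x hx => ?_
      have h1 : T l.castSucc < x := hSlow l (by omega) x hx
      exact lt_of_le_of_lt (hTle _ _ (by simp only [Fin.coe_castSucc, Fin.val_succ]; omega)) h1
    · refine Set.eq_empty_iff_forall_notMem.2 ?_
      rintro x ⟨hx1, hx2⟩
      have h1 : x ≤ T l.succ := hShigh l (by omega) x hx1
      have h2 : T l.succ ≤ T i.succ.castSucc := hTle _ _
        (by simp only [Fin.coe_castSucc, Fin.val_succ]; omega)
      exact absurd hx2 (not_lt.2 (le_trans h1 h2))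
  have hSIic : ∀ (i : Fin Q) (l : Fin (Q + 1)),
      S l ∩ Set.Iic (T i.succ.castSucc) = if i.1 < l.1 then ∅ else S l := by
    intro i l
    split_ifs with h
    · refine Set.eq_empty_iff_forall_notMem.2 ?_
      rintro x ⟨hx1, hx2⟩
      have h1 : T l.castSucc < x := hSlow l (by omega) x hx1
      have h2 : T i.succ.castSucc ≤ T l.castSucc := hTle _ _
        (by simp only [Fin.coe_castSucc, Fin.val_succ]; omega)
      exact absurd hx2 (not_le.2 (lt_of_le_of_lt h2 h1))
    · refine Set.inter_eq_left.2 fun x hx => ?_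
      have h1 : x ≤ T l.succ := hShigh l (by omega) x hx
      exact le_trans h1 (hTle _ _ (by simp only [Fin.coe_castSucc, Fin.val_succ]; omega))
  clear_value b F
  set D : Fin (Q + 1) → ℝ := fun l =>
    (∫ y in Set.Ioc (T l.castSucc) (T l.succ), Real.exp y) * b l
      - ∫ y in S l, Real.exp y * f y with hDdef
  have hIoc_const : ∀ (l : Fin (Q + 1)) (Kv : ℝ),
      ∫ _ in Set.Ioc (T l.castSucc) (T l.succ), Kv = Kv * (T l.succ - T l.castSucc) := by
    intro l Kv
    rw [setIntegral_const, Real.volume_real_Ioc, max_eq_left (hδ l).le]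
    rw [smul_eq_mul, mul_comm]
  have hCform : ∀ i : Fin Q,
      (∫ y in Set.Ioi (T i.succ.castSucc), (Real.exp y - K i.succ.castSucc) *
          ∑ l : Fin (Q + 1),
            Set.indicator (Set.Ioc (T l.castSucc) (T l.succ)) (fun _ => b l) y)
        - (∫ y in Set.Ioi (T i.succ.castSucc), (Real.exp y - K i.succ.castSucc) * f y)
      = ∑ l : Fin (Q + 1), if i.1 < l.1 then D l else 0 := by
    intro i
    rw [hstep (Set.Ioi _) measurableSet_Ioi (fun y => Real.exp y - K i.succ.castSucc) (Real.continuous_exp.sub continuous_const)]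
    rw [hsplit (Set.Ioi (T i.succ.castSucc)) measurableSet_Ioi _ (hcall_int (K i.succ.castSucc))]
    rw [← Finset.sum_sub_distrib]
    refine Finset.sum_congr rfl fun l _ => ?_
    rw [hIoiIoc i l, hSIoi i l]
    split_ifs with h
    · have e1 : ∫ y in Set.Ioc (T l.castSucc) (T l.succ), (Real.exp y - K i.succ.castSucc)
          = (∫ y in Set.Ioc (T l.castSucc) (T l.succ), Real.exp y)
            - K i.succ.castSucc * (T l.succ - T l.castSucc) := by
        rw [integral_sub Real.continuous_exp.integrableOn_Ioc
          (integrableOn_const (by rw [Real.volume_Ioc]; exact ENNReal.ofReal_ne_top))]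
        rw [hIoc_const]
      have e2 : ∫ y in S l, (Real.exp y - K i.succ.castSucc) * f y
          = (∫ y in S l, Real.exp y * f y) - K i.succ.castSucc * F l := by
        have : (fun y => (Real.exp y - K i.succ.castSucc) * f y)
            = fun y => Real.exp y * f y - K i.succ.castSucc * f y := by funext y; ring
        rw [this, integral_sub hfe.integrableOn (hfi.integrableOn.const_mul _),
          integral_const_mul]
        simp only [hFdef]
      rw [e1, e2, hDdef]
      simp only
      linear_combination (-(K i.succ.castSucc)) * (hbδ l)
    · simp
  have hPform : ∀ i : Fin Q,
      (∫ y in Set.Iic (T i.succ.castSucc), (K i.succ.castSucc - Real.exp y) *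
          ∑ l : Fin (Q + 1),
            Set.indicator (Set.Ioc (T l.castSucc) (T l.succ)) (fun _ => b l) y)
        - (∫ y in Set.Iic (T i.succ.castSucc), (K i.succ.castSucc - Real.exp y) * f y)
      = ∑ l : Fin (Q + 1), if i.1 < l.1 then 0 else -(D l) := by
    intro i
    rw [hstep (Set.Iic _) measurableSet_Iic (fun y => K i.succ.castSucc - Real.exp y) (continuous_const.sub Real.continuous_exp)]
    rw [hsplit (Set.Iic (T i.succ.castSucc)) measurableSet_Iic _ (hput_int (K i.succ.castSucc))]
    rw [← Finset.sum_sub_distrib]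
    refine Finset.sum_congr rfl fun l _ => ?_
    rw [hIicIoc i l, hSIic i l]
    split_ifs with h
    · simp
    · have e1 : ∫ y in Set.Ioc (T l.castSucc) (T l.succ), (K i.succ.castSucc - Real.exp y)
          = K i.succ.castSucc * (T l.succ - T l.castSucc)
            - (∫ y in Set.Ioc (T l.castSucc) (T l.succ), Real.exp y) := by
        rw [integral_sub
          (integrableOn_const (C := K i.succ.castSucc) (by rw [Real.volume_Ioc]; exact ENNReal.ofReal_ne_top))
          Real.continuous_exp.integrableOn_Ioc]
        rw [hIoc_const]
      have e2 : ∫ y in S l, (K i.succ.castSucc - Real.exp y) * f y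
          = K i.succ.castSucc * F l - (∫ y in S l, Real.exp y * f y) := by
        have : (fun y => (K i.succ.castSucc - Real.exp y) * f y)
            = fun y => K i.succ.castSucc * f y - Real.exp y * f y := by funext y; ring
        rw [this, integral_sub (hfi.integrableOn.const_mul _) hfe.integrableOn,
          integral_const_mul]
        simp only [hFdef]
      rw [e1, e2, hDdef]
      simp only
      linear_combination (K i.succ.castSucc) * (hbδ l)
  have hle : ∀ l : Fin (Q + 1), T l.castSucc ≤ T l.succ :=
    fun l => (hT (Fin.castSucc_lt_succ (i := l))).le
  have hexpT : ∀ j : Fin (Q + 2), Real.exp (T j) = K j := fun j => Real.exp_log (hK j)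
  have hmT : ∀ l : Fin (Q + 1), 0 < l.1 → l.1 < Q → T l.succ - T l.castSucc ≤ m := hm
  have hFS : ∀ l, F l = ∫ y in S l, f y := fun l => by rw [hFdef]
  set Tail : ℝ := ∫ y in Set.Ioi (T (⟨Q, by omega⟩ : Fin (Q + 2))), Real.exp y * f y
    with hTaildef
  set r : ℝ := K (Fin.last (Q + 1)) / K (⟨Q, by omega⟩ : Fin (Q + 2)) with hrdef
  have hr0 : 0 ≤ r := div_nonneg (hK _).le (hK _).le
  have hef0 : ∀ (A : Set ℝ), MeasurableSet A → 0 ≤ ∫ y in A, Real.exp y * f y :=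
    fun A hA => setIntegral_nonneg hA fun x _ => mul_nonneg (Real.exp_pos x).le (hf0 x)
  have hTail0 : 0 ≤ Tail := hef0 _ measurableSet_Ioi
  have hFle1 : ∀ l, F l ≤ 1 := by
    intro l
    rw [hFS l, ← hf1]
    exact setIntegral_le_integral hfi (Filter.Eventually.of_forall hf0)
  have hAup : ∀ l : Fin (Q + 1),
      (∫ y in Set.Ioc (T l.castSucc) (T l.succ), Real.exp y) * b l
        ≤ Real.exp (T l.succ) * F l := by
    intro l
    rw [exp_Ioc_integral (hle l)]
    calc (Real.exp (T l.succ) - Real.exp (T l.castSucc)) * b l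
        ≤ (Real.exp (T l.succ) * (T l.succ - T l.castSucc)) * b l :=
          mul_le_mul_of_nonneg_right (exp_Ioc_bounds (hle l)).2 (hb0 l)
      _ = Real.exp (T l.succ) * (b l * (T l.succ - T l.castSucc)) := by ring
      _ = Real.exp (T l.succ) * F l := by rw [hbδ l]
  have hAlow : ∀ l : Fin (Q + 1),
      Real.exp (T l.castSucc) * F l
        ≤ (∫ y in Set.Ioc (T l.castSucc) (T l.succ), Real.exp y) * b l := by
    intro l
    rw [exp_Ioc_integral (hle l)]
    calc Real.exp (T l.castSucc) * F l
        = Real.exp (T l.castSucc) * (b l * (T l.succ - T l.castSucc)) := by rw [hbδ l]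
      _ = (Real.exp (T l.castSucc) * (T l.succ - T l.castSucc)) * b l := by ring
      _ ≤ (Real.exp (T l.succ) - Real.exp (T l.castSucc)) * b l :=
          mul_le_mul_of_nonneg_right (exp_Ioc_bounds (hle l)).1 (hb0 l)
  have hA0 : ∀ l : Fin (Q + 1),
      0 ≤ (∫ y in Set.Ioc (T l.castSucc) (T l.succ), Real.exp y) * b l := by
    intro l
    rw [exp_Ioc_integral (hle l)]
    exact mul_nonneg (by nlinarith [Real.exp_lt_exp.2 (hT (Fin.castSucc_lt_succ (i := l)))]) (hb0 l)
  have hD0 : ∀ l : Fin (Q + 1), l.1 = 0 → |D l| ≤ 2 * K 1 := by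
    intro l hl
    have hS : S l = Set.Iic (T l.succ) := by rw [hSdef]; simp only [if_pos hl]
    have hK1e : K l.succ = K 1 := by
      congr 1
      apply Fin.ext
      simp [Fin.val_succ, hl]
    have hup : (∫ y in S l, Real.exp y * f y) ≤ Real.exp (T l.succ) * F l := by
      rw [hS, hFS l, hS]
      exact wexp_le hf0 hfi hfe measurableSet_Iic
        (fun y hy => Real.exp_le_exp.2 hy)
    have hlow : 0 ≤ ∫ y in S l, Real.exp y * f y := hef0 _ (hSmeas l)
    have hKF : Real.exp (T l.succ) * F l ≤ K 1 := by
      rw [hexpT l.succ, hK1e]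
      nlinarith [hK (1 : Fin (Q + 2)), hFle1 l, hF0 l]
    rw [hDdef]
    simp only
    refine (abs_sub _ _).trans ?_
    rw [abs_of_nonneg (hA0 l), abs_of_nonneg hlow]
    have := hAup l
    linarith
  have hDQ : ∀ l : Fin (Q + 1), l.1 = Q → |D l| ≤ (r + 1) * Tail := by
    intro l hl
    have hS : S l = Set.Ioi (T l.castSucc) := by
      rw [hSdef]; simp only [if_neg (by omega : ¬ l.1 = 0), if_pos hl]
    have hcast : l.castSucc = (⟨Q, by omega⟩ : Fin (Q + 2)) := by
      apply Fin.ext; simp [hl]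
    have hsucc : l.succ = Fin.last (Q + 1) := by
      apply Fin.ext; simp [Fin.val_succ, hl]
    have hB : (∫ y in S l, Real.exp y * f y) = Tail := by
      rw [hS, hcast, hTaildef]
    have hKQF : K (⟨Q, by omega⟩ : Fin (Q + 2)) * F l ≤ Tail := by
      rw [hTaildef, hFS l, hS, hcast]
      refine le_wexp hf0 hfi hfe measurableSet_Ioi fun y hy => ?_
      rw [← hexpT (⟨Q, by omega⟩ : Fin (Q + 2))]
      exact (Real.exp_le_exp.2 (le_of_lt hy))
    have hup : (∫ y in Set.Ioc (T l.castSucc) (T l.succ), Real.exp y) * b l ≤ r * Tail := by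
      refine (hAup l).trans ?_
      rw [hexpT l.succ, hsucc]
      have heq : K (Fin.last (Q + 1)) * F l
          = r * (K (⟨Q, by omega⟩ : Fin (Q + 2)) * F l) := by
        rw [hrdef]
        field_simp
        rw [eq_div_iff (hK (⟨Q, by omega⟩ : Fin (Q + 2))).ne']
      rw [heq]
      exact mul_le_mul_of_nonneg_left hKQF hr0
    rw [hDdef]
    simp only
    refine (abs_sub _ _).trans ?_
    rw [abs_of_nonneg (hA0 l), abs_of_nonneg (hef0 _ (hSmeas l)), hB]
    linarith
  have hDmid : ∀ l : Fin (Q + 1), l.1 ≠ 0 → l.1 ≠ Q →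
      |D l| ≤ m * Real.exp m * ∫ y in S l, Real.exp y * f y := by
    intro l h0 hQl
    have hS : S l = Set.Ioc (T l.castSucc) (T l.succ) := by
      rw [hSdef]; simp only [if_neg h0, if_neg hQl]
    have hδm : T l.succ - T l.castSucc ≤ m := hmT l (by omega) (by omega)
    have hBup : (∫ y in S l, Real.exp y * f y) ≤ Real.exp (T l.succ) * F l := by
      rw [hS, hFS l, hS]
      exact wexp_le hf0 hfi hfe measurableSet_Ioc fun y hy => Real.exp_le_exp.2 hy.2
    have hBlow : Real.exp (T l.castSucc) * F l ≤ ∫ y in S l, Real.exp y * f y := by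
      rw [hS, hFS l, hS]
      exact le_wexp hf0 hfi hfe measurableSet_Ioc fun y hy => Real.exp_le_exp.2 hy.1.le
    have h1 : |D l| ≤ (Real.exp (T l.succ) - Real.exp (T l.castSucc)) * F l := by
      rw [hDdef]
      simp only
      rw [abs_sub_le_iff]
      constructor
      · have := hAup l
        linarith
      · have := hAlow l
        linarith
    have h5 := (exp_Ioc_bounds (hle l)).2
    have h2 : Real.exp (T l.succ)
        = Real.exp (T l.succ - T l.castSucc) * Real.exp (T l.castSucc) := by
      rw [← Real.exp_add]; ring_nf
    have h3 : Real.exp (T l.succ - T l.castSucc) ≤ Real.exp m := Real.exp_le_exp.2 hδm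
    calc |D l| ≤ (Real.exp (T l.succ) - Real.exp (T l.castSucc)) * F l := h1
      _ ≤ (Real.exp (T l.succ) * m) * F l := by
          have hvm : Real.exp (T l.succ) * (T l.succ - T l.castSucc)
              ≤ Real.exp (T l.succ) * m :=
            mul_le_mul_of_nonneg_left hδm (Real.exp_pos _).le
          exact mul_le_mul_of_nonneg_right (h5.trans hvm) (hF0 l)
      _ = m * (Real.exp (T l.succ - T l.castSucc) * (Real.exp (T l.castSucc) * F l)) := by
          rw [h2]; ring
      _ ≤ m * (Real.exp m * (Real.exp (T l.castSucc) * F l)) := by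
          refine mul_le_mul_of_nonneg_left ?_ hm0
          exact mul_le_mul_of_nonneg_right h3 (mul_nonneg (Real.exp_pos _).le (hF0 l))
      _ ≤ m * (Real.exp m * ∫ y in S l, Real.exp y * f y) := by
          refine mul_le_mul_of_nonneg_left ?_ hm0
          exact mul_le_mul_of_nonneg_left hBlow (Real.exp_pos m).le
      _ = m * Real.exp m * ∫ y in S l, Real.exp y * f y := by ring
  set w : Fin (Q + 1) → ℝ := fun l => (if l.1 = 0 then 2 * K 1 else 0) +
    (if l.1 = Q then (r + 1) * Tail else 0) +
    m * Real.exp m * ∫ y in S l, Real.exp y * f y with hwdef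
  have ht3 : ∀ l, 0 ≤ m * Real.exp m * ∫ y in S l, Real.exp y * f y :=
    fun l => mul_nonneg (mul_nonneg hm0 (Real.exp_pos m).le) (hef0 _ (hSmeas l))
  have hw0 : ∀ l, 0 ≤ w l := by
    intro l
    rw [hwdef]
    refine add_nonneg (add_nonneg ?_ ?_) (ht3 l)
    · split_ifs
      · nlinarith [hK (1 : Fin (Q + 2))]
      · exact le_refl 0
    · split_ifs
      · exact mul_nonneg (by linarith) hTail0
      · exact le_refl 0
  have hDw : ∀ l, |D l| ≤ w l := by
    intro l
    rw [hwdef]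
    simp only
    by_cases h0 : l.1 = 0
    · rw [if_pos h0, if_neg (by omega)]
      have h := hD0 l h0
      have := ht3 l
      linarith
    · by_cases hQl : l.1 = Q
      · rw [if_neg h0, if_pos hQl]
        have h := hDQ l hQl
        have := ht3 l
        linarith
      · rw [if_neg h0, if_neg hQl]
        have h := hDmid l h0 hQl
        have h1 : (0:ℝ) ≤ (r + 1) * Tail := mul_nonneg (by linarith) hTail0
        linarith
  have hsumw : ∑ l, w l
      = 2 * K 1 + (r + 1) * Tail + m * Real.exp m * ∫ x, Real.exp x * f x := by
    rw [hwdef]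
    simp only
    rw [Finset.sum_add_distrib, Finset.sum_add_distrib, ← Finset.mul_sum, hMtot]
    congr 2
    · rw [Finset.sum_eq_single (⟨0, by omega⟩ : Fin (Q + 1))]
      · simp
      · intro c _ hc
        rw [if_neg (fun h => hc (Fin.ext h))]
      · intro h
        exact absurd (Finset.mem_univ _) h
    · rw [Finset.sum_eq_single (⟨Q, by omega⟩ : Fin (Q + 1))]
      · simp
      · intro c _ hc
        rw [if_neg (fun h => hc (Fin.ext h))]
      · intro h
        exact absurd (Finset.mem_univ _) h
  refine ⟨b, hb0, ?_, ?_⟩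
  · show ∑ l : Fin (Q + 1), b l * (T l.succ - T l.castSucc) = 1
    simp only [hbδ]
    exact hmass
  · intro i
    constructor
    · show |(∫ y in Set.Ioi (T i.succ.castSucc),
            (Real.exp y - K i.succ.castSucc) *
              ∑ l : Fin (Q + 1),
                Set.indicator (Set.Ioc (T l.castSucc) (T l.succ)) (fun _ => b l) y) -
          ∫ y in Set.Ioi (T i.succ.castSucc), (Real.exp y - K i.succ.castSucc) * f y| ≤
            2 * K 1 + m * Real.exp m * (∫ x, Real.exp x * f x) +
              (K (Fin.last (Q + 1)) / K ⟨Q, by omega⟩ + 1) *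
                ∫ y in Set.Ioi (T (⟨Q, by omega⟩ : Fin (Q + 2))), Real.exp y * f y
      rw [hCform i]
      calc |∑ l : Fin (Q + 1), if i.1 < l.1 then D l else 0|
          ≤ ∑ l : Fin (Q + 1), |if i.1 < l.1 then D l else 0| :=
            Finset.abs_sum_le_sum_abs _ _
        _ ≤ ∑ l, w l := by
            refine Finset.sum_le_sum fun l _ => ?_
            split_ifs
            · exact hDw l
            · simpa using hw0 l
        _ = 2 * K 1 + (r + 1) * Tail + m * Real.exp m * ∫ x, Real.exp x * f x := hsumw
        _ = 2 * K 1 + m * Real.exp m * (∫ x, Real.exp x * f x) + (r + 1) * Tail := by ring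
        _ = _ := by rw [hrdef, hTaildef]
    · show |(∫ y in Set.Iio (T i.succ.castSucc),
            (K i.succ.castSucc - Real.exp y) *
              ∑ l : Fin (Q + 1),
                Set.indicator (Set.Ioc (T l.castSucc) (T l.succ)) (fun _ => b l) y) -
          ∫ y in Set.Iio (T i.succ.castSucc), (K i.succ.castSucc - Real.exp y) * f y| ≤
            2 * K 1 + m * Real.exp m * (∫ x, Real.exp x * f x) +
              (K (Fin.last (Q + 1)) / K ⟨Q, by omega⟩ + 1) *
                ∫ y in Set.Ioi (T (⟨Q, by omega⟩ : Fin (Q + 2))), Real.exp y * f y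
      rw [show (∫ y in Set.Iio (T i.succ.castSucc),
            (K i.succ.castSucc - Real.exp y) *
              ∑ l : Fin (Q + 1),
                Set.indicator (Set.Ioc (T l.castSucc) (T l.succ)) (fun _ => b l) y)
          = ∫ y in Set.Iic (T i.succ.castSucc),
            (K i.succ.castSucc - Real.exp y) *
              ∑ l : Fin (Q + 1),
                Set.indicator (Set.Ioc (T l.castSucc) (T l.succ)) (fun _ => b l) y from
          setIntegral_congr_set Iio_ae_eq_Iic]
      rw [show (∫ y in Set.Iio (T i.succ.castSucc), (K i.succ.castSucc - Real.exp y) * f y)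
          = ∫ y in Set.Iic (T i.succ.castSucc), (K i.succ.castSucc - Real.exp y) * f y from
          setIntegral_congr_set Iio_ae_eq_Iic]
      rw [hPform i]
      calc |∑ l : Fin (Q + 1), if i.1 < l.1 then 0 else -(D l)|
          ≤ ∑ l : Fin (Q + 1), |if i.1 < l.1 then 0 else -(D l)| :=
            Finset.abs_sum_le_sum_abs _ _
        _ ≤ ∑ l, w l := by
            refine Finset.sum_le_sum fun l _ => ?_
            split_ifs
            · simpa using hw0 l
            · rw [abs_neg]
              exact hDw l
        _ = 2 * K 1 + (r + 1) * Tail + m * Real.exp m * ∫ x, Real.exp x * f x := hsumw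
        _ = 2 * K 1 + m * Real.exp m * (∫ x, Real.exp x * f x) + (r + 1) * Tail := by ring
        _ = _ := by rw [hrdef, hTaildef]


/-- Theorem 3.1: consistency of the piecewise constant least squares
estimator of the risk-neutral density for recovering option prices, as the strike
grid refines and extends (`K_1 → 0`, `K_q → ∞`, `q → ∞`, mesh `→ 0`). -/
theorem stmt_9
    -- the risk-neutral density
    (f : ℝ → ℝ) (hf_cont : Continuous f) (hf_nonneg : ∀ x, 0 ≤ f x)
    (hf_int : Integrable f) (hf_one : (∫ x, f x) = 1)
    (hf_exp : Integrable (fun x => Real.exp x * f x))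
    (R : ℝ) (c : ℝ) (hc : 1 < c)
    -- a sequence of strike grids K_0 = K_1/c < K_1 < ... < K_q < K_{q+1} = c K_q
    (q : ℕ → ℕ) (hq1 : ∀ n, 1 ≤ q n)
    (K : (n : ℕ) → Fin (q n + 2) → ℝ)
    (hKpos : ∀ n i, 0 < K n i) (hKmono : ∀ n, StrictMono (K n))
    (hK0 : ∀ n, K n 0 = K n 1 / c)
    (hKlast : ∀ n, K n (Fin.last (q n + 1)) = c * K n ⟨q n, by omega⟩)
    -- asymptotic regime: K_1 → 0, K_q → ∞, q → ∞, mesh |Δ| → 0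
    (hK1 : Tendsto (fun n => K n 1) atTop (nhds 0))
    (hKq : Tendsto (fun n => K n ⟨q n, by omega⟩) atTop atTop)
    (hq : Tendsto q atTop atTop)
    (hmesh : Tendsto (fun n => ⨆ i : Fin (q n - 1),
      Real.log (K n ⟨i.1 + 2, by omega⟩ / K n ⟨i.1 + 1, by omega⟩)) atTop (nhds 0))
    -- market prices of calls and puts with strikes K_1, ..., K_q
    (Ctil Ptil : (n : ℕ) → Fin (q n) → ℝ)
    (hCtil : ∀ n i, Ctil n i = Real.exp (-R) *
      ∫ y in Set.Ioi (Real.log (K n i.succ.castSucc)),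
        (Real.exp y - K n i.succ.castSucc) * f y)
    (hPtil : ∀ n i, Ptil n i = Real.exp (-R) *
      ∫ y in Set.Iio (Real.log (K n i.succ.castSucc)),
        (K n i.succ.castSucc - Real.exp y) * f y)
    -- estimated prices computed from a step density with coefficients b
    (Chat Phat : (n : ℕ) → (Fin (q n + 1) → ℝ) → Fin (q n) → ℝ)
    (hChat : ∀ n b i, Chat n b i = Real.exp (-R) *
      ∫ y in Set.Ioi (Real.log (K n i.succ.castSucc)),
        (Real.exp y - K n i.succ.castSucc) *
          ∑ l : Fin (q n + 1),
            Set.indicator (Set.Ioc (Real.log (K n l.castSucc)) (Real.log (K n l.succ)))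
              (fun _ => b l) y)
    (hPhat : ∀ n b i, Phat n b i = Real.exp (-R) *
      ∫ y in Set.Iio (Real.log (K n i.succ.castSucc)),
        (K n i.succ.castSucc - Real.exp y) *
          ∑ l : Fin (q n + 1),
            Set.indicator (Set.Ioc (Real.log (K n l.castSucc)) (Real.log (K n l.succ)))
              (fun _ => b l) y)
    -- the least squares objective over admissible step densities
    (L : (n : ℕ) → (Fin (q n + 1) → ℝ) → ℝ)
    (hL : ∀ n b, L n b = (∑ i : Fin (q n), (Chat n b i - Ctil n i) ^ 2) +
      ∑ i : Fin (q n), (Phat n b i - Ptil n i) ^ 2)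
    -- a : the least squares minimizer among nonnegative step densities of unit mass
    (a : (n : ℕ) → Fin (q n + 1) → ℝ)
    (ha_nonneg : ∀ n l, 0 ≤ a n l)
    (ha_mass : ∀ n, ∑ l : Fin (q n + 1),
      a n l * Real.log (K n l.succ / K n l.castSucc) = 1)
    (ha_min : ∀ n, ∀ b : Fin (q n + 1) → ℝ, (∀ l, 0 ≤ b l) →
      (∑ l : Fin (q n + 1), b l * Real.log (K n l.succ / K n l.castSucc)) = 1 →
      L n (a n) ≤ L n b) :
    Tendsto (fun n => (1 / (2 * (q n : ℝ))) *
      ((∑ i : Fin (q n), (Chat n (a n) i - Ctil n i) ^ 2) +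
        ∑ i : Fin (q n), (Phat n (a n) i - Ptil n i) ^ 2)) atTop (nhds 0) := by
  set M : ℝ := ∫ x, Real.exp x * f x with hMdef
  set Mesh : ℕ → ℝ := fun n => ⨆ i : Fin (q n - 1),
    Real.log (K n ⟨i.1 + 2, by omega⟩ / K n ⟨i.1 + 1, by omega⟩) with hMeshdef
  set Tailn : ℕ → ℝ := fun n =>
    ∫ y in Set.Ioi (Real.log (K n ⟨q n, by omega⟩)), Real.exp y * f y with hTailndef
  set E : ℕ → ℝ := fun n => 2 * K n 1 + Mesh n * Real.exp (Mesh n) * M + (c + 1) * Tailn n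
    with hEdef
  have hMesh0 : ∀ n, 0 ≤ Mesh n := by
    intro n
    by_cases hqn : q n - 1 = 0
    · haveI : IsEmpty (Fin (q n - 1)) := by rw [hqn]; infer_instance
      simp only [hMeshdef]
      exact le_of_eq (Real.iSup_of_isEmpty _).symm
    · have hne : 0 < q n - 1 := Nat.pos_of_ne_zero hqn
      refine le_trans ?_ (le_ciSup (Finite.bddAbove_range _) (⟨0, hne⟩ : Fin (q n - 1)))
      refine Real.log_nonneg ?_
      rw [le_div_iff₀ (hKpos n _)]
      rw [one_mul]
      exact (hKmono n (by rw [Fin.lt_def]; simp)).le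
  have hMeshle : ∀ n, ∀ l : Fin (q n + 1), 0 < l.1 → l.1 < q n →
      Real.log (K n l.succ) - Real.log (K n l.castSucc) ≤ Mesh n := by
    intro n l hl0 hlq
    have hig : l.1 - 1 < q n - 1 := by omega
    have hterm : Real.log (K n l.succ) - Real.log (K n l.castSucc)
        = Real.log (K n ⟨(l.1 - 1) + 2, by omega⟩ / K n ⟨(l.1 - 1) + 1, by omega⟩) := by
      have e1 : (l.succ : Fin (q n + 2)) = ⟨(l.1 - 1) + 2, by omega⟩ := by
        apply Fin.ext
        simp only [Fin.val_succ]
        omega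
      have e2 : (l.castSucc : Fin (q n + 2)) = ⟨(l.1 - 1) + 1, by omega⟩ := by
        apply Fin.ext
        simp only [Fin.coe_castSucc]
        omega
      rw [Real.log_div (hKpos n _).ne' (hKpos n _).ne', e1, e2]
    rw [hterm]
    simp only [hMeshdef]
    exact le_ciSup (f := fun i : Fin (q n - 1) =>
      Real.log (K n ⟨i.1 + 2, by omega⟩ / K n ⟨i.1 + 1, by omega⟩))
      (Finite.bddAbove_range _) (⟨l.1 - 1, hig⟩ : Fin (q n - 1))
  have hkey : ∀ n, ∃ bb : Fin (q n + 1) → ℝ, (∀ l, 0 ≤ bb l) ∧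
      (∑ l : Fin (q n + 1), bb l * (Real.log (K n l.succ) - Real.log (K n l.castSucc))) = 1 ∧
      ∀ i : Fin (q n),
        |(∫ y in Set.Ioi (Real.log (K n i.succ.castSucc)),
            (Real.exp y - K n i.succ.castSucc) *
              ∑ l : Fin (q n + 1),
                Set.indicator (Set.Ioc (Real.log (K n l.castSucc)) (Real.log (K n l.succ)))
                  (fun _ => bb l) y) -
          ∫ y in Set.Ioi (Real.log (K n i.succ.castSucc)),
            (Real.exp y - K n i.succ.castSucc) * f y| ≤
          2 * K n 1 + Mesh n * Real.exp (Mesh n) * M +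
            (K n (Fin.last (q n + 1)) / K n ⟨q n, by omega⟩ + 1) *
              ∫ y in Set.Ioi (Real.log (K n ⟨q n, by omega⟩)), Real.exp y * f y ∧
        |(∫ y in Set.Iio (Real.log (K n i.succ.castSucc)),
            (K n i.succ.castSucc - Real.exp y) *
              ∑ l : Fin (q n + 1),
                Set.indicator (Set.Ioc (Real.log (K n l.castSucc)) (Real.log (K n l.succ)))
                  (fun _ => bb l) y) -
          ∫ y in Set.Iio (Real.log (K n i.succ.castSucc)),
            (K n i.succ.castSucc - Real.exp y) * f y| ≤
          2 * K n 1 + Mesh n * Real.exp (Mesh n) * M +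
            (K n (Fin.last (q n + 1)) / K n ⟨q n, by omega⟩ + 1) *
              ∫ y in Set.Ioi (Real.log (K n ⟨q n, by omega⟩)), Real.exp y * f y := by
    intro n
    exact per_n f hf_cont hf_nonneg hf_int hf_one hf_exp (q n) (hq1 n) (K n)
      (hKpos n) (hKmono n) (Mesh n) (hMesh0 n) (hMeshle n)
  choose bb hbb0 hbbmass hbbbound using hkey
  have hratio : ∀ n, K n (Fin.last (q n + 1)) / K n ⟨q n, by omega⟩ = c := by
    intro n
    rw [hKlast n, mul_div_assoc, div_self (hKpos n _).ne', mul_one]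
  have hEbound : ∀ n i,
      |Chat n (bb n) i - Ctil n i| ≤ Real.exp (-R) * E n ∧
      |Phat n (bb n) i - Ptil n i| ≤ Real.exp (-R) * E n := by
    intro n i
    obtain ⟨h1, h2⟩ := hbbbound n i
    rw [hratio n] at h1 h2
    constructor
    · rw [hChat, hCtil, ← mul_sub, abs_mul, abs_of_pos (Real.exp_pos (-R))]
      exact mul_le_mul_of_nonneg_left h1 (Real.exp_pos (-R)).le
    · rw [hPhat, hPtil, ← mul_sub, abs_mul, abs_of_pos (Real.exp_pos (-R))]
      exact mul_le_mul_of_nonneg_left h2 (Real.exp_pos (-R)).le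
  have hbbmass' : ∀ n,
      (∑ l : Fin (q n + 1), bb n l * Real.log (K n l.succ / K n l.castSucc)) = 1 := by
    intro n
    rw [← hbbmass n]
    refine Finset.sum_congr rfl fun l _ => ?_
    rw [Real.log_div (hKpos n _).ne' (hKpos n _).ne']
  have hq1' : ∀ n, (1:ℝ) ≤ (q n : ℝ) := fun n => by exact_mod_cast hq1 n
  have hVle : ∀ n, (1 / (2 * (q n : ℝ))) *
      ((∑ i : Fin (q n), (Chat n (a n) i - Ctil n i) ^ 2) +
        ∑ i : Fin (q n), (Phat n (a n) i - Ptil n i) ^ 2) ≤ (Real.exp (-R) * E n) ^ 2 := by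
    intro n
    have hLa : L n (a n) ≤ L n (bb n) := ha_min n (bb n) (hbb0 n) (hbbmass' n)
    have hsq : ∀ x B : ℝ, |x| ≤ B → x ^ 2 ≤ B ^ 2 := by
      intro x B h
      calc x ^ 2 = |x| ^ 2 := (sq_abs x).symm
        _ ≤ B ^ 2 := pow_le_pow_left₀ (abs_nonneg x) h 2
    have hsum1 : (∑ i : Fin (q n), (Chat n (bb n) i - Ctil n i) ^ 2)
        ≤ (q n : ℝ) * (Real.exp (-R) * E n) ^ 2 := by
      refine le_trans (Finset.sum_le_card_nsmul Finset.univ _ _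
        (fun i _ => hsq _ _ (hEbound n i).1)) ?_
      simp [Finset.card_univ, nsmul_eq_mul]
    have hsum2 : (∑ i : Fin (q n), (Phat n (bb n) i - Ptil n i) ^ 2)
        ≤ (q n : ℝ) * (Real.exp (-R) * E n) ^ 2 := by
      refine le_trans (Finset.sum_le_card_nsmul Finset.univ _ _
        (fun i _ => hsq _ _ (hEbound n i).2)) ?_
      simp [Finset.card_univ, nsmul_eq_mul]
    have hLb : L n (bb n) ≤ 2 * (q n : ℝ) * (Real.exp (-R) * E n) ^ 2 := by
      rw [hL]
      linarith
    have hfrac : (0:ℝ) < 2 * (q n : ℝ) := by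
      have := hq1' n
      linarith
    calc (1 / (2 * (q n : ℝ))) *
        ((∑ i : Fin (q n), (Chat n (a n) i - Ctil n i) ^ 2) +
          ∑ i : Fin (q n), (Phat n (a n) i - Ptil n i) ^ 2)
        = (1 / (2 * (q n : ℝ))) * L n (a n) := by rw [hL]
      _ ≤ (1 / (2 * (q n : ℝ))) * (2 * (q n : ℝ) * (Real.exp (-R) * E n) ^ 2) := by
          refine mul_le_mul_of_nonneg_left (hLa.trans hLb) ?_
          positivity
      _ = (Real.exp (-R) * E n) ^ 2 := by
          field_simp
          rw [mul_div_cancel_left₀ _ (ne_of_gt (by linarith [hq1' n]) : (q n : ℝ) ≠ 0)]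
  have hV0 : ∀ n, 0 ≤ (1 / (2 * (q n : ℝ))) *
      ((∑ i : Fin (q n), (Chat n (a n) i - Ctil n i) ^ 2) +
        ∑ i : Fin (q n), (Phat n (a n) i - Ptil n i) ^ 2) := by
    intro n
    refine mul_nonneg (by positivity) (add_nonneg ?_ ?_) <;>
      exact Finset.sum_nonneg fun i _ => sq_nonneg _
  have hE0 : Tendsto E atTop (nhds 0) := by
    have t1 : Tendsto (fun n => 2 * K n 1) atTop (nhds 0) := by
      have := hK1.const_mul (2:ℝ)
      simpa using this
    have t2 : Tendsto (fun n => Mesh n * Real.exp (Mesh n) * M) atTop (nhds 0) := by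
      have hcont : Continuous fun x : ℝ => x * Real.exp x * M :=
        (continuous_id.mul Real.continuous_exp).mul continuous_const
      have h0 : Tendsto (fun x : ℝ => x * Real.exp x * M) (nhds 0) (nhds 0) := by
        simpa using hcont.tendsto 0
      exact h0.comp hmesh
    have t3 : Tendsto (fun n => (c + 1) * Tailn n) atTop (nhds 0) := by
      have hlog : Tendsto (fun n => Real.log (K n ⟨q n, by omega⟩)) atTop atTop :=
        Real.tendsto_log_atTop.comp hKq
      have htail2 : Tendsto Tailn atTop (nhds 0) := by
        have := (tail_tendsto hf_exp
          (fun x => mul_nonneg (Real.exp_pos x).le (hf_nonneg x))).comp hlog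
        exact this
      have := htail2.const_mul (c + 1)
      simpa using this
    have := (t1.add t2).add t3
    simpa [hEdef] using this
  have hG : Tendsto (fun n => (Real.exp (-R) * E n) ^ 2) atTop (nhds 0) := by
    have h1 : Tendsto (fun n => Real.exp (-R) * E n) atTop (nhds 0) := by
      have := hE0.const_mul (Real.exp (-R))
      simpa using this
    have := h1.pow 2
    simpa using this
  exact squeeze_zero hV0 hVle hG
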